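/- Let k ≥ 1 be an integer, let Z = (Z₁,…,Z_k) be a random vector whose coordinates are independent standard normal random variables, and let μ ∈ ℝ^k. Then for every real s, P(‖μ + Z‖ ≤ s) ≤ Φ(s − ‖μ‖), where ‖·‖ is the Euclidean norm on ℝ^k and Φ is the cumulative distribution function of the standard normal distribution. -/

import Mathlib

open MeasureTheory ProbabilityTheory Real Complex Set
open scoped ENNReal NNReal

lemma integral_rexp_quadratic {p : ℝ} (hp : p < 0) (q d : ℝ) :
    ∫ x : ℝ, rexp (p * x ^ 2 + q * x + d)
      = Real.sqrt (π / -p) * rexp (d - q ^ 2 / (4 * p)) := by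
  have h := integral_cexp_quadratic (b := (p : ℂ)) (by simpa using hp) (q : ℂ) (d : ℂ)
  have h1 : (fun x : ℝ => Complex.exp ((p : ℂ) * x ^ 2 + q * x + d))
      = fun x : ℝ => (RCLike.ofReal (K := ℂ) (rexp (p * x ^ 2 + q * x + d))) := by
    ext x
    show cexp _ = ((rexp (p * x ^ 2 + q * x + d) : ℝ) : ℂ)
    rw [Complex.ofReal_exp]
    push_cast
    ring_nf
  rw [h1, integral_ofReal] at h
  have hpos : (0:ℝ) ≤ π / -p := (div_pos Real.pi_pos (neg_pos.mpr hp)).le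
  have h2 : ((Real.pi : ℂ) / -(p : ℂ)) ^ (1 / 2 : ℂ)
      = ((Real.sqrt (π / -p) : ℝ) : ℂ) := by
    rw [show ((Real.pi : ℂ) / -(p : ℂ)) = ((π / -p : ℝ) : ℂ) by push_cast; ring]
    rw [show ((1 / 2 : ℂ)) = ((1 / 2 : ℝ) : ℂ) by norm_num]
    rw [← Complex.ofReal_cpow hpos]
    rw [Real.sqrt_eq_rpow]
  have h3 : Complex.exp ((d : ℂ) - (q : ℂ) ^ 2 / (4 * (p : ℂ)))
      = ((rexp (d - q ^ 2 / (4 * p)) : ℝ) : ℂ) := by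
    rw [Complex.ofReal_exp]
    push_cast
    ring_nf
  rw [h2, h3, ← Complex.ofReal_mul] at h
  exact Complex.ofReal_injective h

lemma gaussianPDFReal_conv {a b : ℝ≥0} (ha : a ≠ 0) (hb : b ≠ 0) (z : ℝ) :
    ∫ x : ℝ, gaussianPDFReal 0 a x * gaussianPDFReal 0 b (z - x)
      = gaussianPDFReal 0 (a + b) z := by
  have hA : (0:ℝ) < a := lt_of_le_of_ne a.coe_nonneg (by exact_mod_cast ha.symm)
  have hB : (0:ℝ) < b := lt_of_le_of_ne b.coe_nonneg (by exact_mod_cast hb.symm)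
  have hπ := Real.pi_pos
  set A : ℝ := (a : ℝ) with hAdef
  set B : ℝ := (b : ℝ) with hBdef
  set p : ℝ := -(1/(2*A) + 1/(2*B)) with hp_def
  have hp : p < 0 := by
    rw [hp_def]
    have : 0 < 1/(2*A) + 1/(2*B) := by positivity
    linarith
  set q : ℝ := z / B with hq_def
  set d : ℝ := -z^2/(2*B) with hd_def
  set C : ℝ := (Real.sqrt (2*π*A))⁻¹ * (Real.sqrt (2*π*B))⁻¹ with hC_def
  have key : ∀ x : ℝ, gaussianPDFReal 0 a x * gaussianPDFReal 0 b (z - x)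
      = C * rexp (p * x^2 + q * x + d) := by
    intro x
    simp only [gaussianPDFReal, sub_zero]
    rw [hC_def, mul_mul_mul_comm, ← Real.exp_add]
    congr 1
    rw [hp_def, hq_def, hd_def]
    field_simp
    simp only [hAdef, hBdef]
    ring
  simp_rw [key]
  rw [MeasureTheory.integral_const_mul, integral_rexp_quadratic hp]
  have hAB : A + B ≠ 0 := by positivity
  have hpalt : p = -(A+B)/(2*A*B) := by
    rw [hp_def]
    field_simp
    ring
  have e0 : 4 * p = -(2*(A+B))/(A*B) := by
    rw [hpalt]; field_simp; ring
  have hexp : d - q^2/(4*p) = -(z - 0)^2/(2*(A+B)) := by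
    rw [hd_def, hq_def, e0, div_div_eq_mul_div]
    field_simp
    ring
  have hconst : C * Real.sqrt (π / -p) = (Real.sqrt (2*π*(A+B)))⁻¹ := by
    rw [hC_def, ← Real.sqrt_inv, ← Real.sqrt_inv, ← Real.sqrt_inv,
      ← Real.sqrt_mul (by positivity), ← Real.sqrt_mul (by positivity)]
    congr 1
    rw [hpalt]
    field_simp
  rw [show C * (Real.sqrt (π / -p) * rexp (d - q^2/(4*p)))
      = (C * Real.sqrt (π / -p)) * rexp (d - q^2/(4*p)) by ring, hconst, hexp]
  simp only [gaussianPDFReal]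
  norm_num
  simp only [hAdef, hBdef]

lemma integrable_gaussian_conv (v₁ v₂ : ℝ≥0) (z : ℝ) :
    Integrable (fun x => gaussianPDFReal 0 v₁ x * gaussianPDFReal 0 v₂ (z - x)) := by
  refine Integrable.mono' ((integrable_gaussianPDFReal 0 v₁).mul_const ((Real.sqrt (2*π*v₂))⁻¹))
    (((measurable_gaussianPDFReal 0 v₁).mul ((measurable_gaussianPDFReal 0 v₂).comp
      (measurable_const.sub measurable_id))).aestronglyMeasurable)
    (Filter.Eventually.of_forall fun x => ?_)
  rw [Real.norm_of_nonneg (mul_nonneg (gaussianPDFReal_nonneg _ _ _) (gaussianPDFReal_nonneg _ _ _))]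
  refine mul_le_mul_of_nonneg_left ?_ (gaussianPDFReal_nonneg _ _ _)
  rw [gaussianPDFReal]
  refine mul_le_of_le_one_right (by positivity) ?_
  rw [Real.exp_le_one_iff]
  have h2v : (0:ℝ) ≤ 2 * (v₂:ℝ) := by positivity
  exact div_nonpos_of_nonpos_of_nonneg (neg_nonpos.mpr (sq_nonneg _)) h2v

lemma gaussianReal_conv (v₁ v₂ : ℝ≥0) :
    ((gaussianReal 0 v₁).prod (gaussianReal 0 v₂)).map (fun p : ℝ × ℝ => p.1 + p.2)
      = gaussianReal 0 (v₁ + v₂) := by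
  by_cases h1 : v₁ = 0
  · subst h1
    rw [gaussianReal_zero_var, Measure.dirac_prod, Measure.map_map (by fun_prop) (by fun_prop)]
    have : ((fun p : ℝ × ℝ => p.1 + p.2) ∘ Prod.mk (0:ℝ)) = (fun y : ℝ => (0:ℝ) + y) := rfl
    rw [this]
    rw [show (fun y : ℝ => (0:ℝ) + y) = ((0:ℝ) + ·) from rfl, gaussianReal_map_const_add]
    norm_num
  by_cases h2 : v₂ = 0
  · subst h2
    rw [gaussianReal_zero_var, Measure.prod_dirac, Measure.map_map (by fun_prop) (by fun_prop)]
    have : ((fun p : ℝ × ℝ => p.1 + p.2) ∘ (fun x : ℝ => (x, (0:ℝ)))) = (· + (0:ℝ)) := rfl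
    rw [this, gaussianReal_map_add_const]
    norm_num
  have hv : v₁ + v₂ ≠ 0 := fun h => h1 (by simpa using (add_eq_zero.mp h).1)
  have hadd : Measurable (fun p : ℝ × ℝ => p.1 + p.2) := measurable_add
  refine MeasureTheory.Measure.ext_of_Iic _ _ (fun t => ?_)
  rw [Measure.map_apply hadd measurableSet_Iic,
    Measure.prod_apply (hadd measurableSet_Iic)]
  have hpre : ∀ x : ℝ, (Prod.mk x ⁻¹' ((fun p : ℝ × ℝ => p.1 + p.2) ⁻¹' Set.Iic t))
      = Set.Iic (t - x) := by
    intro x; ext y; simp [le_sub_iff_add_le']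
  simp_rw [hpre]
  have hγ2 : ∀ x : ℝ, gaussianReal 0 v₂ (Set.Iic (t - x))
      = ∫⁻ z, (Set.Iic t).indicator (fun z => gaussianPDF 0 v₂ (z - x)) z ∂volume := by
    intro x
    rw [gaussianReal_apply _ h2, ← lintegral_indicator measurableSet_Iic,
      ← lintegral_sub_right_eq_self
        (fun y => (Set.Iic (t-x)).indicator (gaussianPDF 0 v₂) y) x]
    congr 1
    ext z
    by_cases hz : z ≤ t
    · rw [Set.indicator_of_mem (by simp [hz] : z - x ∈ Set.Iic (t - x)),
        Set.indicator_of_mem (by simpa using hz : z ∈ Set.Iic t)]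
    · rw [Set.indicator_of_notMem (by simp [hz] : z - x ∉ Set.Iic (t - x)),
        Set.indicator_of_notMem (by simpa using hz : z ∉ Set.Iic t)]
  simp_rw [hγ2]
  have hmeas2 : Measurable (fun q : ℝ × ℝ =>
      (Set.Iic t).indicator (fun z => gaussianPDF 0 v₂ (z - q.1)) q.2) := by
    have h0 : Measurable (fun q : ℝ × ℝ => gaussianPDF 0 v₂ (q.2 - q.1)) :=
      (measurable_gaussianPDF 0 v₂).comp (measurable_snd.sub measurable_fst)
    have : (fun q : ℝ × ℝ => (Set.Iic t).indicator (fun z => gaussianPDF 0 v₂ (z - q.1)) q.2)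
        = fun q : ℝ × ℝ => ({p : ℝ × ℝ | p.2 ∈ Set.Iic t}).indicator
            (fun q : ℝ × ℝ => gaussianPDF 0 v₂ (q.2 - q.1)) q := by
      ext q
      by_cases hq : q.2 ∈ Set.Iic t
      · rw [Set.indicator_of_mem hq, Set.indicator_of_mem (by exact hq)]
      · rw [Set.indicator_of_notMem hq, Set.indicator_of_notMem (by exact hq)]
    rw [this]
    exact h0.indicator (measurable_snd measurableSet_Iic)
  rw [gaussianReal_of_var_ne_zero _ h1,
    lintegral_withDensity_eq_lintegral_mul _ (measurable_gaussianPDF 0 v₁)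
      hmeas2.lintegral_prod_right']
  simp only [Pi.mul_apply]
  have hpull : ∀ x : ℝ, gaussianPDF 0 v₁ x
        * ∫⁻ z, (Set.Iic t).indicator (fun z => gaussianPDF 0 v₂ (z - x)) z ∂volume
      = ∫⁻ z, gaussianPDF 0 v₁ x
        * (Set.Iic t).indicator (fun z => gaussianPDF 0 v₂ (z - x)) z ∂volume := by
    intro x
    exact (lintegral_const_mul _ (show Measurable fun z : ℝ =>
      (Set.Iic t).indicator (fun z => gaussianPDF 0 v₂ (z - x)) z
      from hmeas2.comp measurable_prodMk_left)).symm
  simp_rw [hpull]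
  rw [lintegral_lintegral_swap (Measurable.aemeasurable (by
    exact ((measurable_gaussianPDF 0 v₁).comp measurable_fst).mul hmeas2))]
  have hinner : ∀ z : ℝ, (∫⁻ x, gaussianPDF 0 v₁ x
        * (Set.Iic t).indicator (fun z => gaussianPDF 0 v₂ (z - x)) z ∂volume)
      = (Set.Iic t).indicator
          (fun z => ∫⁻ x, gaussianPDF 0 v₁ x * gaussianPDF 0 v₂ (z - x) ∂volume) z := by
    intro z
    by_cases hz : z ∈ Set.Iic t
    · simp only [Set.indicator_of_mem hz]
    · simp only [Set.indicator_of_notMem hz, mul_zero, lintegral_zero]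
  simp_rw [hinner]
  have hH : ∀ z : ℝ, (∫⁻ x, gaussianPDF 0 v₁ x * gaussianPDF 0 v₂ (z - x) ∂volume)
      = gaussianPDF 0 (v₁ + v₂) z := by
    intro z
    simp_rw [gaussianPDF, ← ENNReal.ofReal_mul (gaussianPDFReal_nonneg 0 v₁ _)]
    rw [← ofReal_integral_eq_lintegral_ofReal (integrable_gaussian_conv v₁ v₂ z)
      (Filter.Eventually.of_forall fun x =>
        mul_nonneg (gaussianPDFReal_nonneg _ _ _) (gaussianPDFReal_nonneg _ _ _)),
      gaussianPDFReal_conv h1 h2 z]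
  simp_rw [hH]
  rw [lintegral_indicator measurableSet_Iic, gaussianReal_apply _ hv]

lemma map_linear_gaussian : ∀ (k : ℕ) (u : Fin k → ℝ),
    (Measure.pi fun _ : Fin k => gaussianReal 0 1).map (fun z => ∑ i, u i * z i)
      = gaussianReal 0 (NNReal.mk (∑ i, (u i)^2) (Finset.sum_nonneg fun i _ => sq_nonneg _)) := by
  intro k
  induction k with
  | zero =>
    intro u
    have h0 : (fun z : Fin 0 → ℝ => ∑ i, u i * z i) = fun _ => (0:ℝ) := by
      ext z; simp
    rw [h0, Measure.map_const]
    have : (NNReal.mk (∑ i, (u i)^2) (Finset.sum_nonneg fun i _ => sq_nonneg _) : ℝ≥0) = 0 := by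
      ext; simp
    rw [this, gaussianReal_zero_var]
    simp
  | succ k ih =>
    intro u
    set e := MeasurableEquiv.piFinSuccAbove (fun _ : Fin (k+1) => ℝ) 0 with he
    have mp := measurePreserving_piFinSuccAbove (fun _ : Fin (k+1) => gaussianReal 0 1) 0
    set g : ℝ × (Fin k → ℝ) → ℝ := fun p => u 0 * p.1 + ∑ j, u j.succ * p.2 j with hg
    have hgmeas : Measurable g := by
      apply Measurable.add
      · exact (measurable_fst).const_mul _
      · exact Finset.measurable_sum _ fun j _ => ((measurable_pi_apply j).comp measurable_snd).const_mul _
    have hcomp : (fun z : Fin (k+1) → ℝ => ∑ i, u i * z i) = g ∘ e := by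
      ext z
      rw [Fin.sum_univ_succ]
      rfl
    rw [hcomp, ← Measure.map_map hgmeas e.measurable, mp.map_eq]
    have hprod : (Measure.pi fun _ : Fin k => gaussianReal 0 1)
        = Measure.pi fun j : Fin k => gaussianReal 0 1 := rfl
    have hsplit : ((gaussianReal 0 1).prod (Measure.pi fun _ : Fin k => gaussianReal 0 1)).map g
        = (((gaussianReal 0 1).map (fun x => u 0 * x)).prod
            ((Measure.pi fun _ : Fin k => gaussianReal 0 1).map
              (fun w : Fin k → ℝ => ∑ j, u j.succ * w j))).map (fun p : ℝ × ℝ => p.1 + p.2) := by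
      have hf1 : Measurable fun x : ℝ => u 0 * x := measurable_id.const_mul (u 0)
      have hf2 : Measurable fun w : Fin k → ℝ => ∑ j, u j.succ * w j :=
        Finset.measurable_sum _ fun j _ => (measurable_pi_apply j).const_mul _
      rw [Measure.map_prod_map _ _ hf1 hf2,
        Measure.map_map measurable_add (hf1.prodMap hf2)]
      rfl
    rw [hsplit]
    rw [show ((gaussianReal 0 1).map fun x => u 0 * x) = gaussianReal 0 (NNReal.mk ((u 0)^2) (sq_nonneg _)) by
      rw [show (fun x : ℝ => u 0 * x) = (u 0 * ·) from rfl, gaussianReal_map_const_mul]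
      norm_num]
    rw [ih (fun j => u j.succ), gaussianReal_conv]
    congr 1
    ext
    push_cast
    rw [Fin.sum_univ_succ]

/-- Let `k ≥ 1`, let `Z = (Z₁,…,Z_k)` have independent standard normal
coordinates, and let `μ ∈ ℝ^k`. Then for every real `s`,
`P(‖μ + Z‖ ≤ s) ≤ Φ(s − ‖μ‖)`, where `Φ` is the standard normal CDF. -/
theorem noncentral_chisq_lower_tail_bound
    (k : ℕ) (hk : 1 ≤ k) (μ : Fin k → ℝ) (s : ℝ) :
    (Measure.pi fun _ : Fin k => gaussianReal 0 1)
        {z : Fin k → ℝ | Real.sqrt (∑ i, (μ i + z i) ^ 2) ≤ s}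
      ≤ gaussianReal 0 1 (Set.Iic (s - Real.sqrt (∑ i, μ i ^ 2))) := by
  set N : ℝ := Real.sqrt (∑ i, μ i ^ 2) with hN_def
  have hsum_nonneg : (0:ℝ) ≤ ∑ i, μ i ^ 2 := Finset.sum_nonneg fun i _ => sq_nonneg _
  have hN2 : N ^ 2 = ∑ i, μ i ^ 2 := Real.sq_sqrt hsum_nonneg
  set u : Fin k → ℝ := if N = 0 then Pi.single (⟨0, hk⟩ : Fin k) 1 else fun i => μ i / N
    with hu_def
  have hu2 : ∑ i, u i ^ 2 = 1 := by
    by_cases hN0 : N = 0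
    · rw [hu_def, if_pos hN0]
      rw [Finset.sum_eq_single (⟨0, hk⟩ : Fin k)]
      · simp
      · intro i _ hi; simp [Pi.single_apply, hi]
      · simp
    · rw [hu_def, if_neg hN0]
      simp_rw [div_pow]
      rw [← Finset.sum_div, ← hN2, div_self (pow_ne_zero 2 hN0)]
  have huμ : ∑ i, u i * μ i = N := by
    by_cases hN0 : N = 0
    · have hzero : ∀ i, μ i = 0 := by
        intro i
        have hsum0 : ∑ i, μ i ^ 2 = 0 := by
          have := hN2; rw [hN0] at this; simpa using this.symm
        have := (Finset.sum_eq_zero_iff_of_nonneg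
          (fun i _ => sq_nonneg (μ i))).mp hsum0 i (Finset.mem_univ i)
        exact pow_eq_zero_iff (n := 2) (by norm_num) |>.mp this
      rw [hN0]
      simp [hzero]
    · rw [hu_def, if_neg hN0]
      simp_rw [div_mul_eq_mul_div, ← sq]
      rw [← Finset.sum_div, ← hN2, sq, mul_div_assoc, div_self hN0, mul_one]
  have hsubset : {z : Fin k → ℝ | Real.sqrt (∑ i, (μ i + z i) ^ 2) ≤ s}
      ⊆ {z : Fin k → ℝ | ∑ i, u i * z i ≤ s - N} := by
    intro z hz
    simp only [Set.mem_setOf_eq] at hz ⊢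
    have hcs : (∑ i, u i * (μ i + z i)) ≤ Real.sqrt (∑ i, (μ i + z i) ^ 2) := by
      have h1 : (∑ i, u i * (μ i + z i)) ≤ |∑ i, u i * (μ i + z i)| := le_abs_self _
      have h2 : |∑ i, u i * (μ i + z i)| = Real.sqrt ((∑ i, u i * (μ i + z i)) ^ 2) :=
        (Real.sqrt_sq_eq_abs _).symm
      have h3 : (∑ i, u i * (μ i + z i)) ^ 2 ≤ (∑ i, u i ^ 2) * ∑ i, (μ i + z i) ^ 2 := by
        exact Finset.sum_mul_sq_le_sq_mul_sq Finset.univ u (fun i => μ i + z i)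
      rw [hu2, one_mul] at h3
      calc (∑ i, u i * (μ i + z i)) ≤ |∑ i, u i * (μ i + z i)| := h1
        _ = Real.sqrt ((∑ i, u i * (μ i + z i)) ^ 2) := h2
        _ ≤ Real.sqrt (∑ i, (μ i + z i) ^ 2) := Real.sqrt_le_sqrt h3
    have hexpand : (∑ i, u i * (μ i + z i)) = N + ∑ i, u i * z i := by
      simp_rw [mul_add]
      rw [Finset.sum_add_distrib, huμ]
    have := le_trans hcs hz
    rw [hexpand] at this
    linarith
  have hTmeas : Measurable (fun z : Fin k → ℝ => ∑ i, u i * z i) :=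
    Finset.measurable_sum _ fun j _ => (measurable_pi_apply j).const_mul _
  calc (Measure.pi fun _ : Fin k => gaussianReal 0 1)
        {z : Fin k → ℝ | Real.sqrt (∑ i, (μ i + z i) ^ 2) ≤ s}
      ≤ (Measure.pi fun _ : Fin k => gaussianReal 0 1)
        {z : Fin k → ℝ | ∑ i, u i * z i ≤ s - N} := measure_mono hsubset
    _ = ((Measure.pi fun _ : Fin k => gaussianReal 0 1).map
          (fun z => ∑ i, u i * z i)) (Set.Iic (s - N)) := by
        rw [Measure.map_apply hTmeas measurableSet_Iic]
        rfl
    _ = gaussianReal 0 (NNReal.mk (∑ i, (u i)^2) (Finset.sum_nonneg fun i _ => sq_nonneg _))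
          (Set.Iic (s - N)) := by rw [map_linear_gaussian]
    _ = gaussianReal 0 1 (Set.Iic (s - N)) := by
        have hv1 : (NNReal.mk (∑ i, (u i)^2) (Finset.sum_nonneg fun i _ => sq_nonneg _) : ℝ≥0) = 1 := by
          ext
          simpa using hu2
        rw [hv1]
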